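/- The first-order part of P is a maximum among first-order problems Weihrauch-below P: for every problem P, ¹P is Weihrauch equivalent to the ≤_W-maximum of the set of first-order problems Q with Q ≤_W P. -/

import Mathlib

open Classical

/-- A Turing functional, presented by a monotone computable map on finite prefixes
of the oracle. -/
structure Functional where
  eval : List ℕ → ℕ → Option ℕ
  mono : ∀ σ τ x y, σ <+: τ → eval σ x = some y → eval τ x = some y
  comp : Computable₂ eval

/-- The finite initial segment of `f` of length `k`. -/
def initSeg (f : ℕ → ℕ) (k : ℕ) : List ℕ := (List.range k).map f

/-- `Φ(f)(x)` converges with value `y`. -/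
def Functional.conv (Φ : Functional) (f : ℕ → ℕ) (x y : ℕ) : Prop :=
  ∃ k, Φ.eval (initSeg f k) x = some y

/-- Total application: `Φ(f) = g`. -/
def Functional.Total (Φ : Functional) (f g : ℕ → ℕ) : Prop :=
  ∀ x, Φ.conv f x (g x)

/-- The Turing join of two elements of Baire space. -/
def join (f g : ℕ → ℕ) : ℕ → ℕ := fun n => if n % 2 = 0 then f (n / 2) else g (n / 2)

/-- The embedding of `ℕ` into Baire space: `n` is identified with `n,0,0,0,…`. -/
def natSeq (n : ℕ) : ℕ → ℕ := fun i => if i = 0 then n else 0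

/-- A problem: a partial multifunction on Baire space, given by its domain
(the set of instances) and, for each instance, its set of solutions. -/
structure Problem where
  dom : Set (ℕ → ℕ)
  sol : (ℕ → ℕ) → Set (ℕ → ℕ)

/-- Weihrauch reducibility `Q ≤_W P`. -/
def WRed (Q P : Problem) : Prop :=
  ∃ Φ Ψ : Functional, ∀ f ∈ Q.dom, ∃ h, Φ.Total f h ∧ h ∈ P.dom ∧
    ∀ g ∈ P.sol h, ∃ y, Ψ.Total (join f g) y ∧ y ∈ Q.sol f

/-- Strong Weihrauch reducibility `Q ≤_sW P`: the backward functional only sees the solution. -/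
def SRed (Q P : Problem) : Prop :=
  ∃ Φ Ψ : Functional, ∀ f ∈ Q.dom, ∃ h, Φ.Total f h ∧ h ∈ P.dom ∧
    ∀ g ∈ P.sol h, ∃ y, Ψ.Total g y ∧ y ∈ Q.sol f

/-- Weihrauch equivalence. -/
def WEquiv (Q P : Problem) : Prop := WRed Q P ∧ WRed P Q

/-- Strong Weihrauch equivalence. -/
def SEquiv (Q P : Problem) : Prop := SRed Q P ∧ SRed P Q

/-- A problem is first-order if all its solutions are natural numbers
(under the identification of `n` with `natSeq n`). -/
def FirstOrder (P : Problem) : Prop :=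
  ∀ f ∈ P.dom, ∀ g ∈ P.sol f, ∃ n, g = natSeq n

/-- The code of a functional as an element of Baire space (the graph of its
prefix-evaluation function). -/
def Functional.graph (Φ : Functional) : ℕ → ℕ :=
  fun n => Encodable.encode (Φ.eval (Denumerable.ofNat (List ℕ) n.unpair.1) n.unpair.2)

/-- The first-order part `¹P` of a problem `P`: instances are (codes of) triples
`⟨f,Φ,Ψ⟩` with `Φ(f) ∈ dom(P)` and `Ψ(f,g)(0)↓` for all `g ∈ P(Φ(f))`; the
solutions are all values `Ψ(f,g)(0)` for `g ∈ P(Φ(f))`. -/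
def FOPart (P : Problem) : Problem where
  dom := { h | ∃ (f : ℕ → ℕ) (Φ Ψ : Functional), h = join f (join Φ.graph Ψ.graph) ∧
    ∃ p, Φ.Total f p ∧ p ∈ P.dom ∧ ∀ g ∈ P.sol p, ∃ y, Ψ.conv (join f g) 0 y }
  sol h := { w | ∃ (f : ℕ → ℕ) (Φ Ψ : Functional) (p g : ℕ → ℕ) (y : ℕ),
    h = join f (join Φ.graph Ψ.graph) ∧ Φ.Total f p ∧ p ∈ P.dom ∧ g ∈ P.sol p ∧
    Ψ.conv (join f g) 0 y ∧ w = natSeq y }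

/-- `P` is computably true: every instance computes one of its solutions. -/
def ComputablyTrue (P : Problem) : Prop :=
  ∀ f ∈ P.dom, ∃ g ∈ P.sol f, ∃ Φ : Functional, Φ.Total f g

/-- `P` is uniformly computably true: a single functional solves every instance. -/
def UnifCompTrue (P : Problem) : Prop :=
  ∃ Φ : Functional, ∀ f ∈ P.dom, ∃ g, Φ.Total f g ∧ g ∈ P.sol f

/-- `σ` is a finite initial segment of some `P`-solution to `f`. -/
def Extendible (P : Problem) (f : ℕ → ℕ) (σ : List ℕ) : Prop :=
  ∃ g ∈ P.sol f, σ = initSeg g σ.length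

/-- `P` is undiagonalizable: the set of strings extendible to a solution is
uniformly decidable from the instance. -/
def Undiag (P : Problem) : Prop :=
  ∃ Γ : Functional, ∀ f ∈ P.dom, ∀ σ : List ℕ,
    (Extendible P f σ → Γ.conv f (Encodable.encode σ) 1) ∧
    (¬ Extendible P f σ → Γ.conv f (Encodable.encode σ) 0)


/-! ### Auxiliary machinery -/

section Aux

@[simp] lemma initSeg_length (f : ℕ → ℕ) (k : ℕ) : (initSeg f k).length = k := by
  simp [initSeg]

lemma initSeg_getD {f : ℕ → ℕ} {k i : ℕ} (h : i < k) : (initSeg f k).getD i 0 = f i := by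
  rw [List.getD_eq_getElem _ _ (by simpa using h)]
  simp [initSeg]

lemma initSeg_prefix (f : ℕ → ℕ) {k l : ℕ} (h : k ≤ l) : initSeg f k <+: initSeg f l := by
  have : (initSeg f l).take k = initSeg f k := by
    unfold initSeg
    rw [← List.map_take, List.take_range, Nat.min_eq_left h]
  rw [← this]; exact List.take_prefix _ _

lemma initSeg_congr {f g : ℕ → ℕ} {k : ℕ} (h : ∀ i < k, f i = g i) :
    initSeg f k = initSeg g k := by
  unfold initSeg
  exact List.map_congr_left (fun i hi => h i (List.mem_range.1 hi))

lemma prefix_getD {σ τ : List ℕ} (h : σ <+: τ) {m : ℕ} (hm : m < σ.length) :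
    τ.getD m 0 = σ.getD m 0 := by
  obtain ⟨t, rfl⟩ := h
  exact List.getD_append _ _ _ _ hm

/-- The value of a converging computation is unique. -/
lemma Functional.conv_unique {Φ : Functional} {f : ℕ → ℕ} {x y y' : ℕ}
    (h : Φ.conv f x y) (h' : Φ.conv f x y') : y = y' := by
  obtain ⟨k, hk⟩ := h
  obtain ⟨k', hk'⟩ := h'
  rcases le_total k k' with hle | hle
  · have := Φ.mono _ _ _ _ (initSeg_prefix f hle) hk
    rw [this] at hk'; exact Option.some_injective _ hk'
  · have := Φ.mono _ _ _ _ (initSeg_prefix f hle) hk'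
    rw [this] at hk; exact Option.some_injective _ hk |>.symm ▸ rfl

lemma Functional.total_unique {Φ : Functional} {f p p' : ℕ → ℕ}
    (h : Φ.Total f p) (h' : Φ.Total f p') : p = p' :=
  funext fun x => Functional.conv_unique (h x) (h' x)

lemma Functional.graph_pair (Φ : Functional) (L : List ℕ) (x : ℕ) :
    Φ.graph (Nat.pair (Encodable.encode L) x) = Encodable.encode (Φ.eval L x) := by
  simp [Functional.graph, Nat.unpair_pair, Denumerable.ofNat_encode]

lemma Functional.eval_eq_of_graph_eq {Φ Φ' : Functional} (h : Φ.graph = Φ'.graph) :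
    Φ.eval = Φ'.eval := by
  funext L x
  have := congrFun h (Nat.pair (Encodable.encode L) x)
  rw [Functional.graph_pair, Functional.graph_pair] at this
  exact Encodable.encode_injective this

@[simp] lemma join_even (f g : ℕ → ℕ) (n : ℕ) : join f g (2 * n) = f n := by
  have h1 : (2 * n) % 2 = 0 := by omega
  have h2 : (2 * n) / 2 = n := by omega
  simp [join, h1, h2]

@[simp] lemma join_odd (f g : ℕ → ℕ) (n : ℕ) : join f g (2 * n + 1) = g n := by
  have h1 : (2 * n + 1) % 2 = 1 := by omega
  have h2 : (2 * n + 1) / 2 = n := by omega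
  simp [join, h1, h2]

lemma join_inj {f g f' g' : ℕ → ℕ} (h : join f g = join f' g') : f = f' ∧ g = g' := by
  constructor
  · funext n
    have := congrFun h (2 * n); simpa using this
  · funext n
    have := congrFun h (2 * n + 1); simpa using this

/-! #### first true entry of a boolean list -/

/-- Index of the first `true` in a list of booleans (length if none). -/
def firstTrue (l : List Bool) : ℕ := l.foldr (fun b r => Bool.rec (r + 1) 0 b) 0

@[simp] lemma firstTrue_nil : firstTrue [] = 0 := rfl

lemma firstTrue_cons (b : Bool) (l : List Bool) :
    firstTrue (b :: l) = if b then 0 else firstTrue l + 1 := by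
  cases b <;> simp [firstTrue]

lemma firstTrue_le_length (l : List Bool) : firstTrue l ≤ l.length := by
  induction l with
  | nil => simp
  | cons b l ih =>
    rw [firstTrue_cons]
    cases b
    · simpa using ih
    · simp

lemma firstTrue_false {l : List Bool} {i : ℕ} (h : i < firstTrue l) :
    l.getD i false = false := by
  induction l generalizing i with
  | nil => exact absurd h (by simp)
  | cons b l ih =>
    rw [firstTrue_cons] at h
    cases b with
    | true => simp at h
    | false =>
      simp only [if_neg Bool.false_ne_true] at h
      cases i with
      | zero => exact List.getD_cons_zero
      | succ j =>
        rw [List.getD_cons_succ]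
        exact ih (by omega)

lemma firstTrue_true {l : List Bool} (h : firstTrue l < l.length) :
    l.getD (firstTrue l) false = true := by
  induction l with
  | nil => exact absurd h (by simp)
  | cons b l ih =>
    rw [firstTrue_cons] at h ⊢
    cases b with
    | true => simpa using List.getD_cons_zero
    | false =>
      simp only [if_neg Bool.false_ne_true] at h ⊢
      rw [List.getD_cons_succ]
      exact ih (by simpa using Nat.lt_of_succ_lt_succ (by simpa using h))

/-! #### bounded least search -/

/-- Least `k < n` with `p k = true`, and `n` if there is none. -/
def leastUnder (p : ℕ → Bool) (n : ℕ) : ℕ := firstTrue ((List.range n).map p)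

lemma rangeMap_getD {p : ℕ → Bool} {n i : ℕ} (h : i < n) :
    ((List.range n).map p).getD i false = p i := by
  rw [List.getD_eq_getElem _ _ (by simpa using h)]
  simp

lemma leastUnder_le (p : ℕ → Bool) (n : ℕ) : leastUnder p n ≤ n := by
  unfold leastUnder
  simpa using firstTrue_le_length ((List.range n).map p)

lemma leastUnder_false {p : ℕ → Bool} {n k : ℕ} (h : k < leastUnder p n) : p k = false := by
  have hk : k < n := lt_of_lt_of_le h (leastUnder_le p n)
  have := firstTrue_false h
  rwa [rangeMap_getD hk] at this

lemma leastUnder_true {p : ℕ → Bool} {n : ℕ} (h : leastUnder p n < n) :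
    p (leastUnder p n) = true := by
  have := firstTrue_true (l := (List.range n).map p) (by unfold leastUnder at h; simpa using h)
  have h2 : firstTrue ((List.range n).map p) = leastUnder p n := rfl
  rw [h2] at this
  rwa [rangeMap_getD h] at this

lemma leastUnder_eq {p : ℕ → Bool} {n j : ℕ} (hjn : j < n) (hpj : p j = true)
    (hlt : ∀ k < j, p k = false) : leastUnder p n = j := by
  rcases lt_trichotomy (leastUnder p n) j with h | h | h
  · have := leastUnder_true (lt_trans h hjn)
    rw [hlt _ h] at this; exact absurd this (by simp)
  · exact h
  · have := leastUnder_false h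
    rw [hpj] at this; exact absurd this (by simp)

end Aux


section Core

/-- `seg φ k` is the first `k` entries of `φ` (padded with `0`). -/
def seg (φ : List ℕ) (k : ℕ) : List ℕ := (List.range k).map (fun i => φ.getD i 0)

@[simp] lemma seg_length (φ : List ℕ) (k : ℕ) : (seg φ k).length = k := by simp [seg]

lemma seg_eq_of_prefix {σ τ : List ℕ} (h : σ <+: τ) {k : ℕ} (hk : k ≤ σ.length) :
    seg τ k = seg σ k := by
  unfold seg
  exact List.map_congr_left fun i hi => prefix_getD h (lt_of_lt_of_le (List.mem_range.1 hi) hk)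

lemma seg_initSeg {f : ℕ → ℕ} {n k : ℕ} (h : k ≤ n) : seg (initSeg f n) k = initSeg f k := by
  unfold seg initSeg
  exact List.map_congr_left fun i hi =>
    initSeg_getD (lt_of_lt_of_le (List.mem_range.1 hi) h)

/-- The search predicate of the universal machine: at stage `k`, either the relevant
question is outside the known part `γ` of the graph, or the answer is a convergence. -/
def corePred (γ φ : List ℕ) (x k : ℕ) : Bool :=
  decide (γ.length ≤ Nat.pair (Encodable.encode (seg φ k)) x) ||
  decide (γ.getD (Nat.pair (Encodable.encode (seg φ k)) x) 0 ≠ 0)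

/-- The universal evaluation: apply the functional with graph `γ` (a finite prefix of it)
to the oracle prefix `φ` at input `x`. -/
def core (γ φ : List ℕ) (x : ℕ) : Option ℕ :=
  if Nat.pair (Encodable.encode (seg φ (min (leastUnder (corePred γ φ x) (φ.length + 1)) φ.length))) x < γ.length ∧
      γ.getD (Nat.pair (Encodable.encode (seg φ (min (leastUnder (corePred γ φ x) (φ.length + 1)) φ.length))) x) 0 ≠ 0
  then some (γ.getD (Nat.pair (Encodable.encode (seg φ (min (leastUnder (corePred γ φ x) (φ.length + 1)) φ.length))) x) 0 - 1)
  else none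

lemma corePred_true_of {γ φ : List ℕ} {x k : ℕ}
    (h : Nat.pair (Encodable.encode (seg φ k)) x < γ.length ∧
      γ.getD (Nat.pair (Encodable.encode (seg φ k)) x) 0 ≠ 0) : corePred γ φ x k = true := by
  unfold corePred
  rw [Bool.or_eq_true]
  exact Or.inr (decide_eq_true h.2)

/-- If `core` outputs a value, the search found a genuine stage `j ≤ |φ|`. -/
lemma core_eq_some_iff {γ φ : List ℕ} {x : ℕ} {y : ℕ} :
    core γ φ x = some y ↔
    ∃ j, leastUnder (corePred γ φ x) (φ.length + 1) = j ∧ j ≤ φ.length ∧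
      (Nat.pair (Encodable.encode (seg φ j)) x < γ.length ∧
        γ.getD (Nat.pair (Encodable.encode (seg φ j)) x) 0 ≠ 0) ∧
      y = γ.getD (Nat.pair (Encodable.encode (seg φ j)) x) 0 - 1 := by
  constructor
  · intro h
    unfold core at h
    split_ifs at h with hc
    · refine ⟨leastUnder (corePred γ φ x) (φ.length + 1), rfl, ?_, ?_, ?_⟩
      · -- if the least is φ.length+1 then the condition would contradict leastUnder_false?
        by_contra hgt
        -- leastUnder = φ.length + 1, so min = φ.length, and corePred at φ.length is false
        have hle := leastUnder_le (corePred γ φ x) (φ.length + 1)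
        have heq : leastUnder (corePred γ φ x) (φ.length + 1) = φ.length + 1 := by omega
        have hmin : min (leastUnder (corePred γ φ x) (φ.length + 1)) φ.length = φ.length := by
          omega
        rw [hmin] at hc
        have hfalse : corePred γ φ x φ.length = false :=
          leastUnder_false (n := φ.length + 1) (by omega)
        rw [corePred_true_of hc] at hfalse
        exact absurd hfalse (by simp)
      · have hle := leastUnder_le (corePred γ φ x) (φ.length + 1)
        -- we know now j ≤ φ.length? no: we must redo; use the previous bullet's conclusion
        -- Since the structure is awkward, recompute:
        by_cases hj : leastUnder (corePred γ φ x) (φ.length + 1) ≤ φ.length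
        · rwa [Nat.min_eq_left hj] at hc
        · exfalso
          have hmin : min (leastUnder (corePred γ φ x) (φ.length + 1)) φ.length = φ.length := by
            omega
          rw [hmin] at hc
          have hfalse : corePred γ φ x φ.length = false :=
            leastUnder_false (n := φ.length + 1) (by omega)
          rw [corePred_true_of hc] at hfalse
          exact absurd hfalse (by simp)
      · by_cases hj : leastUnder (corePred γ φ x) (φ.length + 1) ≤ φ.length
        · rw [Nat.min_eq_left hj] at h
          exact (Option.some_injective _ h).symm
        · exfalso
          have hmin : min (leastUnder (corePred γ φ x) (φ.length + 1)) φ.length = φ.length := by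
            omega
          rw [hmin] at hc
          have hfalse : corePred γ φ x φ.length = false :=
            leastUnder_false (n := φ.length + 1) (by omega)
          rw [corePred_true_of hc] at hfalse
          exact absurd hfalse (by simp)
  · rintro ⟨j, hj, hjle, hc, rfl⟩
    unfold core
    rw [hj, Nat.min_eq_left hjle]
    rw [if_pos hc]

/-- Monotonicity of the universal evaluation. -/
lemma core_mono {γ γ' φ φ' : List ℕ} (hγ : γ <+: γ') (hφ : φ <+: φ') {x y : ℕ}
    (h : core γ φ x = some y) : core γ' φ' x = some y := by
  rw [core_eq_some_iff] at h ⊢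
  obtain ⟨j, hj, hjle, hc, hy⟩ := h
  have hlen : φ.length ≤ φ'.length := hφ.length_le
  have hseg : ∀ k ≤ j, seg φ' k = seg φ k := fun k hk =>
    seg_eq_of_prefix hφ (le_trans hk hjle)
  have hγlen : γ.length ≤ γ'.length := hγ.length_le
  have hm : ∀ m < γ.length, γ'.getD m 0 = γ.getD m 0 := fun m hm => prefix_getD hγ hm
  refine ⟨j, ?_, le_trans hjle hlen, ?_, ?_⟩
  · apply leastUnder_eq (by omega)
    · apply corePred_true_of
      rw [hseg j le_rfl, hm _ hc.1]
      exact ⟨lt_of_lt_of_le hc.1 hγlen, hc.2⟩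
    · intro k hk
      have hkf : corePred γ φ x k = false := by
        rw [← hj] at hk; exact leastUnder_false hk
      unfold corePred at hkf ⊢
      rw [hseg k (le_of_lt hk)]
      simp only [Bool.or_eq_false_iff, decide_eq_false_iff_not, not_le, ne_eq,
        Decidable.not_not] at hkf ⊢
      exact ⟨lt_of_lt_of_le hkf.1 hγlen, by rw [hm _ hkf.1]; exact hkf.2⟩
  · rw [hseg j le_rfl, hm _ hc.1]
    exact ⟨lt_of_lt_of_le hc.1 hγlen, hc.2⟩
  · rw [hseg j le_rfl, hm _ hc.1, hy]

/-- Correctness of the universal evaluation on genuine data. -/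
lemma core_correct (Φ : Functional) (f : ℕ → ℕ) (x y : ℕ) (h : Φ.conv f x y) :
    ∃ c₁ c₂, ∀ N n, c₁ ≤ N → c₂ ≤ n →
      core (initSeg Φ.graph N) (initSeg f n) x = some y := by
  obtain ⟨k₀, hk₀⟩ := h
  set M : ℕ → ℕ := fun k => Nat.pair (Encodable.encode (initSeg f k)) x with hM
  refine ⟨(Finset.range (k₀ + 1)).sup M + 1, k₀, fun N n hN hn => ?_⟩
  have hMlt : ∀ k ≤ k₀, M k < N := by
    intro k hk
    have : M k ≤ (Finset.range (k₀ + 1)).sup M :=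
      Finset.le_sup (Finset.mem_range.2 (by omega))
    omega
  have hgetD : ∀ k ≤ k₀, (initSeg Φ.graph N).getD (M k) 0 =
      Encodable.encode (Φ.eval (initSeg f k) x) := by
    intro k hk
    rw [initSeg_getD (hMlt k hk), hM]
    exact Φ.graph_pair _ _
  -- the least stage where Φ.eval converges
  classical
  have hex : ∃ k, (Φ.eval (initSeg f k) x).isSome := ⟨k₀, by rw [hk₀]; rfl⟩
  set j := Nat.find hex with hjdef
  have hjsome : (Φ.eval (initSeg f j) x).isSome := Nat.find_spec hex
  have hjk₀ : j ≤ k₀ := Nat.find_min' hex (by rw [hk₀]; rfl)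
  have hjnone : ∀ k < j, Φ.eval (initSeg f k) x = none := by
    intro k hk
    have := Nat.find_min hex hk
    simpa [Option.isSome_iff_exists, Option.eq_none_iff_forall_not_mem] using this
  obtain ⟨y', hy'⟩ := Option.isSome_iff_exists.1 hjsome
  have hyy : y' = y := by
    have := Φ.mono _ _ _ _ (initSeg_prefix f hjk₀) hy'
    rw [hk₀] at this
    exact (Option.some_injective _ this).symm
  subst hyy
  -- identify the leastUnder search result
  set γ := initSeg Φ.graph N
  set φ := initSeg f n
  have hφlen : φ.length = n := by simp [φ]
  have hγlen : γ.length = N := by simp [γ]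
  have hsegk : ∀ k ≤ k₀, seg φ k = initSeg f k := fun k hk => seg_initSeg (by omega)
  have hleast : leastUnder (corePred γ φ x) (φ.length + 1) = j := by
    apply leastUnder_eq (by omega)
    · apply corePred_true_of
      rw [hsegk j hjk₀]
      refine ⟨by rw [hγlen]; exact hMlt j hjk₀, ?_⟩
      rw [hgetD j hjk₀, hy']
      simp [Encodable.encode_some]
    · intro k hk
      unfold corePred
      rw [hsegk k (le_trans (le_of_lt hk) hjk₀)]
      have h1 : ¬ (γ.length ≤ M k) := by rw [hγlen]; push_neg; exact hMlt k (by omega)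
      have h2 : γ.getD (M k) 0 = 0 := by
        rw [hgetD k (by omega), hjnone k hk]; rfl
      simp [hM] at h1 h2 ⊢
      exact ⟨h1, h2⟩
  rw [core_eq_some_iff]
  refine ⟨j, hleast, by omega, ?_, ?_⟩
  · rw [hsegk j hjk₀]
    refine ⟨by rw [hγlen]; exact hMlt j hjk₀, ?_⟩
    rw [hgetD j hjk₀, hy']
    simp [Encodable.encode_some]
  · rw [hsegk j hjk₀, hgetD j hjk₀, hy']
    simp [Encodable.encode_some, Encodable.encode_nat]

end Core


section Pullback

/-- Extract from a finite prefix `σ` of an oracle `h` the longest determined prefix of the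
sequence `n ↦ h (g n)`. -/
def pullback (g : ℕ → ℕ) (σ : List ℕ) : List ℕ :=
  (List.range (leastUnder (fun n => decide (σ.length ≤ g n)) σ.length)).map
    (fun n => σ.getD (g n) 0)

lemma pullback_prefix (g : ℕ → ℕ) {σ τ : List ℕ} (h : σ <+: τ) :
    pullback g σ <+: pullback g τ := by
  set p : ℕ → Bool := fun n => decide (σ.length ≤ g n)
  set p' : ℕ → Bool := fun n => decide (τ.length ≤ g n)
  set j := leastUnder p σ.length with hj
  set j' := leastUnder p' τ.length with hj'
  have hlen : σ.length ≤ τ.length := h.length_le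
  have hjj : j ≤ j' := by
    by_contra hgt
    push_neg at hgt
    have hj'στ : j' < σ.length := lt_of_lt_of_le hgt (leastUnder_le _ _)
    have h1 : p' j' = true := leastUnder_true (lt_of_lt_of_le hj'στ hlen)
    have h2 : p j' = false := leastUnder_false hgt
    simp only [p, p', decide_eq_true_eq, decide_eq_false_iff_not, not_le] at h1 h2
    omega
  have hglt : ∀ n < j, g n < σ.length := by
    intro n hn
    have := leastUnder_false (n := σ.length) hn
    simpa [p] using this
  have heq : pullback g σ = (pullback g τ).take j := by
    unfold pullback
    rw [← hj, ← hj', ← List.map_take, List.take_range, Nat.min_eq_left hjj]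
    exact List.map_congr_left fun n hn =>
      ((prefix_getD h (hglt n (List.mem_range.1 hn)))).symm
  rw [heq]
  exact List.take_prefix _ _

lemma pullback_initSeg (g h : ℕ → ℕ) (c K : ℕ) (hcK : c ≤ K) (hK : ∀ n < c, g n < K) :
    ∃ j, c ≤ j ∧ pullback g (initSeg h K) = initSeg (fun n => h (g n)) j := by
  set σ := initSeg h K with hσ
  have hσlen : σ.length = K := by simp [hσ]
  set p : ℕ → Bool := fun n => decide (σ.length ≤ g n)
  set j := leastUnder p σ.length with hj
  refine ⟨j, ?_, ?_⟩
  · by_contra hlt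
    push_neg at hlt
    have hjK : j < K := lt_of_lt_of_le hlt hcK
    have h1 : p j = true := leastUnder_true (p := p) (n := σ.length) (by omega)
    have hgj := hK j hlt
    rw [show p j = decide (σ.length ≤ g j) from rfl, decide_eq_true_eq] at h1
    omega
  · unfold pullback
    rw [← hj]
    unfold initSeg
    apply List.map_congr_left
    intro n hn
    have hn' : n < j := List.mem_range.1 hn
    have : p n = false := leastUnder_false hn'
    simp only [p, decide_eq_false_iff_not, not_le] at this
    rw [hσ]
    exact initSeg_getD (by omega)

end Pullback


section Comp

open Primrec

lemma seg_primrec : Primrec₂ seg :=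
  Primrec.list_map (Primrec.list_range.comp Primrec.snd)
    ((Primrec.list_getD 0).comp₂ (Primrec.fst.comp₂ Primrec₂.left) Primrec₂.right)

lemma firstTrue_primrec : Primrec firstTrue := by
  have h : Primrec₂ (fun (_ : List Bool) (p : Bool × ℕ) => cond p.1 0 (p.2 + 1)) :=
    (Primrec.cond (Primrec.fst.comp Primrec.snd) (Primrec.const 0)
      (Primrec.succ.comp (Primrec.snd.comp Primrec.snd))).to₂
  exact (Primrec.list_foldr Primrec.id (Primrec.const 0) h).of_eq fun l => by
    unfold firstTrue
    congr 1
    funext b r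
    cases b <;> rfl

lemma leastUnder_primrec {α : Type} [Primcodable α] {p : α → ℕ → Bool} {n : α → ℕ}
    (hp : Primrec₂ p) (hn : Primrec n) : Primrec fun a => leastUnder (p a) (n a) :=
  firstTrue_primrec.comp (Primrec.list_map (Primrec.list_range.comp hn) hp)

lemma corePred_primrec :
    Primrec₂ fun (a : (List ℕ × List ℕ) × ℕ) (k : ℕ) => corePred a.1.1 a.1.2 a.2 k := by
  have hm : Primrec₂ fun (a : (List ℕ × List ℕ) × ℕ) (k : ℕ) =>
      Nat.pair (Encodable.encode (seg a.1.2 k)) a.2 :=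
    Primrec₂.natPair.comp₂
      (Primrec.encode.comp₂ (seg_primrec.comp₂
        ((Primrec.snd.comp Primrec.fst).comp₂ Primrec₂.left) Primrec₂.right))
      (Primrec.snd.comp₂ Primrec₂.left)
  have hlen : Primrec₂ fun (a : (List ℕ × List ℕ) × ℕ) (_ : ℕ) => a.1.1.length :=
    (Primrec.list_length.comp (Primrec.fst.comp Primrec.fst)).comp₂ Primrec₂.left
  have hb1 : Primrec₂ fun (a : (List ℕ × List ℕ) × ℕ) (k : ℕ) =>
      decide (a.1.1.length ≤ Nat.pair (Encodable.encode (seg a.1.2 k)) a.2) :=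
    (Primrec.nat_le.comp₂ hlen hm).decide
  have hgd : Primrec₂ fun (a : (List ℕ × List ℕ) × ℕ) (k : ℕ) =>
      a.1.1.getD (Nat.pair (Encodable.encode (seg a.1.2 k)) a.2) 0 :=
    (Primrec.list_getD 0).comp₂
      ((Primrec.fst.comp Primrec.fst).comp₂ Primrec₂.left) hm
  have hb2 : Primrec₂ fun (a : (List ℕ × List ℕ) × ℕ) (k : ℕ) =>
      decide (a.1.1.getD (Nat.pair (Encodable.encode (seg a.1.2 k)) a.2) 0 ≠ 0) := by
    have := ((Primrec.eq (α := ℕ)).comp₂ hgd (Primrec₂.const 0)).decide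
    have hnot : Primrec Bool.not := Primrec.dom_bool _
    exact (hnot.comp₂ this).of_eq fun a k => by
      by_cases h : a.1.1.getD (Nat.pair (Encodable.encode (seg a.1.2 k)) a.2) 0 = 0 <;> simp [h]
  have hor : Primrec₂ Bool.or := Primrec.dom_bool₂ _
  exact (hor.comp₂ hb1 hb2).of_eq fun a k => rfl

lemma core_primrec : Primrec fun (a : (List ℕ × List ℕ) × ℕ) => core a.1.1 a.1.2 a.2 := by
  have hj : Primrec fun (a : (List ℕ × List ℕ) × ℕ) =>
      min (leastUnder (corePred a.1.1 a.1.2 a.2) (a.1.2.length + 1)) a.1.2.length := by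
    have h1 : Primrec fun (a : (List ℕ × List ℕ) × ℕ) =>
        leastUnder (corePred a.1.1 a.1.2 a.2) (a.1.2.length + 1) :=
      leastUnder_primrec corePred_primrec
        (Primrec.succ.comp (Primrec.list_length.comp (Primrec.snd.comp Primrec.fst)))
    exact Primrec.nat_min.comp h1 (Primrec.list_length.comp (Primrec.snd.comp Primrec.fst))
  have hm : Primrec fun (a : (List ℕ × List ℕ) × ℕ) =>
      Nat.pair (Encodable.encode (seg a.1.2
        (min (leastUnder (corePred a.1.1 a.1.2 a.2) (a.1.2.length + 1)) a.1.2.length))) a.2 :=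
    Primrec₂.natPair.comp
      (Primrec.encode.comp (seg_primrec.comp (Primrec.snd.comp Primrec.fst) hj))
      Primrec.snd
  have hgd : Primrec fun (a : (List ℕ × List ℕ) × ℕ) =>
      a.1.1.getD (Nat.pair (Encodable.encode (seg a.1.2
        (min (leastUnder (corePred a.1.1 a.1.2 a.2) (a.1.2.length + 1)) a.1.2.length))) a.2) 0 :=
    (Primrec.list_getD 0).comp (Primrec.fst.comp Primrec.fst) hm
  have hcond : PrimrecPred fun (a : (List ℕ × List ℕ) × ℕ) =>
      Nat.pair (Encodable.encode (seg a.1.2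
        (min (leastUnder (corePred a.1.1 a.1.2 a.2) (a.1.2.length + 1)) a.1.2.length))) a.2 <
        a.1.1.length ∧
      a.1.1.getD (Nat.pair (Encodable.encode (seg a.1.2
        (min (leastUnder (corePred a.1.1 a.1.2 a.2) (a.1.2.length + 1)) a.1.2.length))) a.2) 0 ≠ 0 := by
    refine PrimrecPred.and ?_ ?_
    · exact Primrec.nat_lt.comp hm (Primrec.list_length.comp (Primrec.fst.comp Primrec.fst))
    · exact ((Primrec.eq (α := ℕ)).comp hgd (Primrec.const 0)).not
  exact (Primrec.ite hcond (Primrec.option_some.comp (Primrec.pred.comp hgd))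
    (Primrec.const none)).of_eq fun a => by rw [core]; rfl

lemma pullback_primrec {g : ℕ → ℕ} (hg : Primrec g) : Primrec (pullback g) := by
  have hp : Primrec₂ fun (σ : List ℕ) (n : ℕ) => decide (σ.length ≤ g n) :=
    Primrec.nat_le.comp₂ (Primrec.list_length.comp₂ Primrec₂.left) (hg.comp₂ Primrec₂.right) |>.decide
  have hj : Primrec fun (σ : List ℕ) =>
      leastUnder (fun n => decide (σ.length ≤ g n)) σ.length :=
    leastUnder_primrec hp Primrec.list_length
  exact Primrec.list_map (Primrec.list_range.comp hj)
    ((Primrec.list_getD 0).comp₂ Primrec₂.left (hg.comp₂ Primrec₂.right))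

end Comp


section Functionals

lemma initSeg_getElem? {f : ℕ → ℕ} {n i : ℕ} (h : i < n) : (initSeg f n)[i]? = some (f i) := by
  rw [List.getElem?_eq_getElem (by simpa using h)]
  simp [initSeg]

lemma prefix_getElem? {σ τ : List ℕ} (h : σ <+: τ) {i : ℕ} {y : ℕ} (hy : σ[i]? = some y) :
    τ[i]? = some y := by
  obtain ⟨t, rfl⟩ := h
  have hi : i < σ.length := by
    by_contra hi
    rw [List.getElem?_eq_none (by omega)] at hy
    exact absurd hy (by simp)
  rw [List.getElem?_append_left hi]
  exact hy

/-- The universal forward functional for `¹P ≤_W P`: on an oracle of the form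
`join f (join Φ.graph Ψ.graph)`, it computes `Φ(f)`. -/
def Ufun : Functional where
  eval σ x := core (pullback (fun i => 4 * i + 1) σ) (pullback (fun i => 2 * i) σ) x
  mono := fun σ τ x y hpre h =>
    core_mono (pullback_prefix _ hpre) (pullback_prefix _ hpre) h
  comp := by
    have h1 : Primrec (pullback (fun i => 4 * i + 1)) :=
      pullback_primrec (Primrec.nat_add.comp
        (Primrec.nat_mul.comp (Primrec.const 4) Primrec.id) (Primrec.const 1))
    have h2 : Primrec (pullback (fun i => 2 * i)) :=
      pullback_primrec (Primrec.nat_mul.comp (Primrec.const 2) Primrec.id)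
    exact (core_primrec.comp (((h1.comp Primrec.fst).pair (h2.comp Primrec.fst)).pair
      Primrec.snd)).to_comp

set_option maxHeartbeats 2000000 in
lemma Ufun_conv (Φ₀ : Functional) (f b : ℕ → ℕ) (x y : ℕ) (hc : Φ₀.conv f x y) :
    Ufun.conv (join f (join Φ₀.graph b)) x y := by
  obtain ⟨c₁, c₂, hcc⟩ := core_correct Φ₀ f x y hc
  set h := join f (join Φ₀.graph b) with hh
  obtain ⟨j₁, hj₁, he₁⟩ := pullback_initSeg (fun i => 4 * i + 1) h c₁ (4 * (c₁ + c₂) + 5)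
    (by omega) (fun n hn => show 4 * n + 1 < 4 * (c₁ + c₂) + 5 by omega)
  obtain ⟨j₂, hj₂, he₂⟩ := pullback_initSeg (fun i => 2 * i) h c₂ (4 * (c₁ + c₂) + 5)
    (by omega) (fun n hn => show 2 * n < 4 * (c₁ + c₂) + 5 by omega)
  refine ⟨4 * (c₁ + c₂) + 5, ?_⟩
  show core (pullback (fun i => 4 * i + 1) (initSeg h (4 * (c₁ + c₂) + 5)))
    (pullback (fun i => 2 * i) (initSeg h (4 * (c₁ + c₂) + 5))) x = some y
  rw [he₁, he₂]
  have e1 : initSeg (fun n => h (4 * n + 1)) j₁ = initSeg Φ₀.graph j₁ := by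
    apply initSeg_congr
    intro i _
    have : 4 * i + 1 = 2 * (2 * i) + 1 := by ring
    rw [hh, this, join_odd, join_even]
  have e2 : initSeg (fun n => h (2 * n)) j₂ = initSeg f j₂ := by
    apply initSeg_congr
    intro i _
    rw [hh, join_even]
  rw [e1, e2]
  exact hcc j₁ j₂ hj₁ hj₂

/-- The universal backward functional for `¹P ≤_W P`: on an oracle of the form
`join (join f (join a Ψ.graph)) g`, it outputs `natSeq (Ψ(join f g)(0))`. -/
def Vfun : Functional where
  eval σ x :=
    match x with
    | 0 => core (pullback (fun i => 8 * i + 6) σ)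
        (pullback (fun n => 2 * n - n % 2 * n) σ) 0
    | _ + 1 => some 0
  mono := by
    intro σ τ x y hpre h
    cases x with
    | zero => exact core_mono (pullback_prefix _ hpre) (pullback_prefix _ hpre) h
    | succ n => exact h
  comp := by
    have h1 : Primrec (pullback (fun i : ℕ => 8 * i + 6)) :=
      pullback_primrec (Primrec.nat_add.comp
        (Primrec.nat_mul.comp (Primrec.const 8) Primrec.id) (Primrec.const 6))
    have h2 : Primrec (pullback (fun n : ℕ => 2 * n - n % 2 * n)) :=
      pullback_primrec (Primrec.nat_sub.comp
        (Primrec.nat_mul.comp (Primrec.const 2) Primrec.id)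
        (Primrec.nat_mul.comp (Primrec.nat_mod.comp Primrec.id (Primrec.const 2)) Primrec.id))
    have hb : Computable fun (p : List ℕ × ℕ) => decide (p.2 = 0) :=
      ((Primrec.eq (α := ℕ)).comp Primrec.snd (Primrec.const 0)).decide.to_comp
    refine (Computable.cond hb
      ((core_primrec.comp (((h1.comp Primrec.fst).pair (h2.comp Primrec.fst)).pair
        (Primrec.const 0))).to_comp)
      (Computable.const (some 0))).of_eq ?_
    rintro ⟨σ, x⟩
    cases x with
    | zero => rfl
    | succ n => rfl

set_option maxHeartbeats 1000000 in
lemma Vfun_total (Ψ₀ : Functional) (f g a : ℕ → ℕ) (y : ℕ) (hc : Ψ₀.conv (join f g) 0 y) :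
    Vfun.Total (join (join f (join a Ψ₀.graph)) g) (natSeq y) := by
  set J := join (join f (join a Ψ₀.graph)) g with hJ
  intro x
  cases x with
  | zero =>
    obtain ⟨c₁, c₂, hcc⟩ := core_correct Ψ₀ (join f g) 0 y hc
    obtain ⟨j₁, hj₁, he₁⟩ := pullback_initSeg (fun i => 8 * i + 6) J c₁ (8 * (c₁ + c₂) + 10)
      (by omega) (fun n hn => show 8 * n + 6 < 8 * (c₁ + c₂) + 10 by omega)
    obtain ⟨j₂, hj₂, he₂⟩ := pullback_initSeg (fun n => 2 * n - n % 2 * n) J c₂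
      (8 * (c₁ + c₂) + 10) (by omega)
      (fun n hn => lt_of_le_of_lt (Nat.sub_le _ _)
        (show 2 * n < 8 * (c₁ + c₂) + 10 by omega))
    refine ⟨8 * (c₁ + c₂) + 10, ?_⟩
    show core (pullback (fun i => 8 * i + 6) (initSeg J (8 * (c₁ + c₂) + 10)))
        (pullback (fun n => 2 * n - n % 2 * n) (initSeg J (8 * (c₁ + c₂) + 10))) 0
      = some (natSeq y 0)
    have hny : natSeq y 0 = y := by simp [natSeq]
    rw [hny, he₁, he₂]
    have e1 : initSeg (fun n => J (8 * n + 6)) j₁ = initSeg Ψ₀.graph j₁ := by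
      apply initSeg_congr
      intro i _
      have h86 : 8 * i + 6 = 2 * (4 * i + 3) := by ring
      have h43 : 4 * i + 3 = 2 * (2 * i + 1) + 1 := by ring
      rw [hJ, h86, join_even, h43, join_odd, join_odd]
    have e2 : initSeg (fun n => J (2 * n - n % 2 * n)) j₂ =
        initSeg (join f g) j₂ := by
      apply initSeg_congr
      intro i _
      by_cases hi : i % 2 = 0
      · obtain ⟨t, rfl⟩ : ∃ t, i = 2 * t := ⟨i / 2, by omega⟩
        have hm : (2 * t) % 2 = 0 := by omega
        rw [hm, zero_mul, Nat.sub_zero, hJ]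
        rw [show (2 : ℕ) * (2 * t) = 2 * (2 * t) from rfl, join_even, join_even, join_even]
      · obtain ⟨t, rfl⟩ : ∃ t, i = 2 * t + 1 := ⟨i / 2, by omega⟩
        have hm : (2 * t + 1) % 2 = 1 := by omega
        rw [hm, one_mul]
        rw [show 2 * (2 * t + 1) - (2 * t + 1) = 2 * t + 1 by omega]
        rw [hJ, join_odd, join_odd]
    rw [e1, e2]
    exact hcc j₁ j₂ hj₁ hj₂
  | succ n =>
    refine ⟨0, ?_⟩
    show some 0 = some (natSeq y (n + 1))
    simp [natSeq]

/-- The forward functional for `Q ≤_W ¹P`: pairs the input with a fixed computable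
sequence `c`. -/
def mkPair (c : ℕ → ℕ) (hc : Computable c) : Functional where
  eval σ x := cond (x % 2 == 0) σ[x / 2]? (some (c (x / 2)))
  mono := by
    intro σ τ x y hpre h
    by_cases hx : x % 2 = 0
    · have hb : (x % 2 == 0) = true := by simpa using hx
      rw [hb] at h ⊢
      exact prefix_getElem? hpre h
    · have hb : (x % 2 == 0) = false := by simpa using hx
      rw [hb] at h ⊢
      exact h
  comp := by
    have hb : Computable fun (p : List ℕ × ℕ) => (p.2 % 2 == 0) := by
      have : Primrec fun (p : List ℕ × ℕ) => decide (p.2 % 2 = 0) :=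
        (Primrec.eq (α := ℕ)).comp (Primrec.nat_mod.comp Primrec.snd (Primrec.const 2))
          (Primrec.const 0) |>.decide
      exact this.to_comp.of_eq fun p => by
        by_cases h : p.2 % 2 = 0 <;> simp [h]
    have hg1 : Computable fun (p : List ℕ × ℕ) => p.1[p.2 / 2]? :=
      (Primrec.list_getElem?.comp Primrec.fst
        (Primrec.nat_div.comp Primrec.snd (Primrec.const 2))).to_comp
    have hg2 : Computable fun (p : List ℕ × ℕ) => some (c (p.2 / 2)) :=
      Computable.option_some.comp
        (hc.comp ((Primrec.nat_div.comp Primrec.snd (Primrec.const 2)).to_comp))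
    exact Computable.cond hb hg1 hg2

lemma mkPair_total (c : ℕ → ℕ) (hc : Computable c) (f : ℕ → ℕ) :
    (mkPair c hc).Total f (join f c) := by
  intro x
  by_cases hx : x % 2 = 0
  · refine ⟨x / 2 + 1, ?_⟩
    show cond (x % 2 == 0) (initSeg f (x / 2 + 1))[x / 2]? (some (c (x / 2))) = some (join f c x)
    rw [hx]
    rw [show ((0 : ℕ) == 0) = true from rfl]
    simp only [cond_true]
    rw [initSeg_getElem? (by omega)]
    simp [join, hx]
  · refine ⟨0, ?_⟩
    show cond (x % 2 == 0) _ (some (c (x / 2))) = some (join f c x)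
    have : (x % 2 == 0) = false := by simpa using hx
    rw [this]
    simp only [cond_false]
    simp [join, hx]

/-- The backward functional for `Q ≤_W ¹P`: the projection onto the second component
of a join. -/
def projFun : Functional where
  eval σ x := σ[2 * x + 1]?
  mono := fun σ τ x y hpre h => prefix_getElem? hpre h
  comp :=
    (Primrec.list_getElem?.comp Primrec.fst
      (Primrec.succ.comp (Primrec.nat_mul.comp (Primrec.const 2) Primrec.snd))).to_comp

lemma projFun_total (a b : ℕ → ℕ) : projFun.Total (join a b) b := by
  intro x
  refine ⟨2 * x + 2, ?_⟩
  show (initSeg (join a b) (2 * x + 2))[2 * x + 1]? = some (b x)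
  rw [initSeg_getElem? (by omega)]
  rw [join_odd]

lemma Functional.graph_computable (Φ : Functional) : Computable Φ.graph := by
  have h1 : Computable fun n : ℕ => (Denumerable.ofNat (List ℕ) n.unpair.1) :=
    (Computable.ofNat (List ℕ)).comp (Computable.fst.comp Computable.unpair)
  have h2 : Computable fun n : ℕ => n.unpair.2 := Computable.snd.comp Computable.unpair
  exact Computable.encode.comp (Φ.comp.comp h1 h2)

lemma join_computable {f g : ℕ → ℕ} (hf : Computable f) (hg : Computable g) :
    Computable (join f g) := by
  have hb : Computable fun n : ℕ => (n % 2 == 0) := by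
    have : Primrec fun n : ℕ => decide (n % 2 = 0) :=
      (Primrec.eq (α := ℕ)).comp (Primrec.nat_mod.comp Primrec.id (Primrec.const 2))
        (Primrec.const 0) |>.decide
    exact this.to_comp.of_eq fun n => by by_cases h : n % 2 = 0 <;> simp [h]
  have hdiv : Computable fun n : ℕ => n / 2 :=
    (Primrec.nat_div.comp Primrec.id (Primrec.const 2)).to_comp
  exact (Computable.cond hb (hf.comp hdiv) (hg.comp hdiv)).of_eq fun n => by
    by_cases h : n % 2 = 0
    · have hb2 : (n % 2 == 0) = true := by simpa using h
      rw [hb2]; simp [join, h]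
    · have hb2 : (n % 2 == 0) = false := by simpa using h
      rw [hb2]; simp [join, h]

end Functionals

theorem FOPart_is_max_first_order_below (P : Problem) :
    WRed (FOPart P) P ∧ FirstOrder (FOPart P) ∧
      ∀ Q : Problem, FirstOrder Q → WRed Q P → WRed Q (FOPart P) := by
  refine ⟨?_, ?_, ?_⟩
  · -- `¹P ≤_W P` via the universal functionals
    refine ⟨Ufun, Vfun, ?_⟩
    intro h hdom
    obtain ⟨f, Φ₀, Ψ₀, rfl, p, hTot, hp, hsol⟩ := hdom
    refine ⟨p, fun x => Ufun_conv Φ₀ f Ψ₀.graph x (p x) (hTot x), hp, ?_⟩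
    intro g hg
    obtain ⟨y, hy⟩ := hsol g hg
    exact ⟨natSeq y, Vfun_total Ψ₀ f g Φ₀.graph y hy,
      ⟨f, Φ₀, Ψ₀, p, g, y, rfl, hTot, hp, hg, hy, rfl⟩⟩
  · -- `¹P` is first-order
    intro h _ w hw
    obtain ⟨f, Φ, Ψ, p, g, y, _, _, _, _, _, hw⟩ := hw
    exact ⟨y, hw⟩
  · -- maximality
    intro Q hQ hred
    obtain ⟨Φ, Ψ, hred⟩ := hred
    refine ⟨mkPair (join Φ.graph Ψ.graph)
      (join_computable Φ.graph_computable Ψ.graph_computable), projFun, ?_⟩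
    intro f hf
    obtain ⟨p, hTot, hp, hsol⟩ := hred f hf
    refine ⟨join f (join Φ.graph Ψ.graph), mkPair_total _ _ f, ?_, ?_⟩
    · refine ⟨f, Φ, Ψ, rfl, p, hTot, hp, fun g hg => ?_⟩
      obtain ⟨yseq, hyT, _⟩ := hsol g hg
      exact ⟨yseq 0, hyT 0⟩
    · intro w hw
      obtain ⟨f', Φ₀, Ψ₀, p', g', y, heq, hTot', hp', hg', hconv, rfl⟩ := hw
      obtain ⟨hff, hjoin2⟩ := join_inj heq
      obtain ⟨hgΦ, hgΨ⟩ := join_inj hjoin2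
      subst hff
      have hΦeval : Φ.eval = Φ₀.eval := Functional.eval_eq_of_graph_eq hgΦ
      have hΨeval : Ψ.eval = Ψ₀.eval := Functional.eval_eq_of_graph_eq hgΨ
      have hTotp' : Φ.Total f p' := by
        intro x
        obtain ⟨k, hk⟩ := hTot' x
        exact ⟨k, by rw [hΦeval]; exact hk⟩
      have hpp : p = p' := Functional.total_unique hTot hTotp'
      subst hpp
      obtain ⟨yseq, hyT, hyQ⟩ := hsol g' hg'
      obtain ⟨m, hm⟩ := hQ f hf yseq hyQ
      have hΨconv : Ψ.conv (join f g') 0 y := by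
        obtain ⟨k, hk⟩ := hconv
        exact ⟨k, by rw [hΨeval]; exact hk⟩
      have hy0 : y = yseq 0 := Functional.conv_unique hΨconv (hyT 0)
      have hws : natSeq y = yseq := by
        rw [hm] at hy0 ⊢
        have : m = y := by simp [natSeq] at hy0; omega
        rw [this]
      refine ⟨natSeq y, projFun_total f (natSeq y), ?_⟩
      rw [hws]
      exact hyQ
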